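/- If the positive embedding is unit norm (‖z⁺‖ = 1), every negative satisfies ⟨z_r⁻, z⁺⟩ ≤ 1, at least one negative satisfies the strict inequality ⟨z_r⁻, z⁺⟩ < 1, and the step size satisfies λ > 0, then one gradient step on the contrastive loss strictly increases the anchor–positive similarity: ⟨z_a', z⁺⟩ > ⟨z_a, z⁺⟩, where z_a' = z_a + λ Σ_{r=1}^R α_r (z⁺ − z_r⁻). -/
import Mathlib


open Real BigOperators RealInnerProductSpace

/-- If the positive embedding has unit norm (`‖z⁺‖ = 1`),
every negative satisfies `⟨z_r⁻, z⁺⟩ ≤ 1`, at least one negative satisfies the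
strict inequality `⟨z_r⁻, z⁺⟩ < 1`, and the step size satisfies `λ > 0`, then
one gradient step on the contrastive loss strictly increases the
anchor–positive similarity: `⟨z_a', z⁺⟩ > ⟨z_a, z⁺⟩`, where
`z_a' = z_a + λ • ∑ r, α_r • (z⁺ - z_r⁻)` and `α_r = exp(⟨z_a, z_r⁻⟩)/Z` with
`Z = exp(⟨z_a, z⁺⟩) + ∑ r, exp(⟨z_a, z_r⁻⟩)`. -/
theorem gradient_step_increases_positive_similarity
    (D R : ℕ) (hR : 1 ≤ R)
    (za zpos : EuclideanSpace ℝ (Fin D))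
    (zneg : Fin R → EuclideanSpace ℝ (Fin D))
    (Z : ℝ) (hZ : Z = Real.exp ⟪za, zpos⟫ + ∑ r, Real.exp ⟪za, zneg r⟫)
    (α : Fin R → ℝ) (hα : ∀ r, α r = Real.exp ⟪za, zneg r⟫ / Z)
    (lam : ℝ) (hlam : 0 < lam)
    (za' : EuclideanSpace ℝ (Fin D))
    (hza' : za' = za + lam • ∑ r, α r • (zpos - zneg r))
    (hpos : ‖zpos‖ = 1)
    (hle : ∀ r, ⟪zneg r, zpos⟫ ≤ 1)
    (hlt : ∃ r, ⟪zneg r, zpos⟫ < 1) :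
    ⟪za, zpos⟫ < ⟪za', zpos⟫ := by
  have hZpos : 0 < Z := by
    rw [hZ]
    have : 0 ≤ ∑ r, Real.exp ⟪za, zneg r⟫ :=
      Finset.sum_nonneg fun r _ => (Real.exp_pos _).le
    linarith [Real.exp_pos ⟪za, zpos⟫]
  have hαpos : ∀ r, 0 < α r := fun r => by
    rw [hα]; exact div_pos (Real.exp_pos _) hZpos
  have hzp : ⟪zpos, zpos⟫ = (1 : ℝ) := by
    rw [real_inner_self_eq_norm_sq, hpos]; norm_num
  have key : ⟪za', zpos⟫ = ⟪za, zpos⟫ + lam * ∑ r, α r * (1 - ⟪zneg r, zpos⟫) := by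
    rw [hza', inner_add_left, real_inner_smul_left, sum_inner]
    congr 2
    refine Finset.sum_congr rfl fun r _ => ?_
    rw [real_inner_smul_left, inner_sub_left, hzp, real_inner_comm]
  rw [key]
  have hsum : 0 < ∑ r, α r * (1 - ⟪zneg r, zpos⟫) := by
    obtain ⟨r0, hr0⟩ := hlt
    refine Finset.sum_pos' (fun r _ => mul_nonneg (hαpos r).le (by linarith [hle r])) ⟨r0, Finset.mem_univ r0, mul_pos (hαpos r0) (by linarith)⟩
  nlinarith
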